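/- Let G be a compact simply-connected simple Lie group, let 𝒫 be the union of the closures of all Weyl alcoves containing the origin in their closure, and let L be the coroot lattice. If σ is a face of 𝒫 such that σ + a is also a face of 𝒫 for some nonzero a ∈ L, then both σ and σ + a are faces of the boundary of 𝒫. -/

import Mathlib

open scoped RealInnerProductSpace

noncomputable section

/-- The root system of a compact (simply-connected) simple Lie group of rank `n`, in
abstract form: a finite, reduced, irreducible, crystallographic root system spanning
`𝔱 ≅ ℝ^n`, whose roots are realized as vectors via the inner product
(`α(x) = ⟪α, x⟫`). -/
structure RootSystemData (n : ℕ) where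
  /-- the set of roots -/
  Φ : Finset (EuclideanSpace ℝ (Fin n))
  ne_zero : ∀ α ∈ Φ, α ≠ (0 : EuclideanSpace ℝ (Fin n))
  span_top : Submodule.span ℝ (Φ : Set (EuclideanSpace ℝ (Fin n))) = ⊤
  neg_mem : ∀ α ∈ Φ, -α ∈ Φ
  reflect_mem : ∀ α ∈ Φ, ∀ β ∈ Φ, β - (2 * ⟪β, α⟫ / ⟪α, α⟫) • α ∈ Φ
  crystallographic : ∀ α ∈ Φ, ∀ β ∈ Φ, ∃ k : ℤ, 2 * ⟪β, α⟫ / ⟪α, α⟫ = (k : ℝ)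
  reduced : ∀ α ∈ Φ, ∀ c : ℝ, c • α ∈ Φ → c = 1 ∨ c = -1
  irreducible : ∀ s ⊆ Φ, (∀ α ∈ s, ∀ β ∈ Φ, β ∉ s → ⟪α, β⟫ = 0) → s = ∅ ∨ s = Φ

namespace RootSystemData

variable {n : ℕ} (D : RootSystemData n)

/-- The wall `α⁻¹(k)` of the Stiefel diagram. -/
def wall (α : EuclideanSpace ℝ (Fin n)) (k : ℤ) : Set (EuclideanSpace ℝ (Fin n)) :=
  {x | ⟪α, x⟫ = (k : ℝ)}

/-- The Stiefel diagram `⋃_{α ∈ Φ, k ∈ ℤ} α⁻¹(k) ⊆ 𝔱`. -/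
def stiefelDiagram : Set (EuclideanSpace ℝ (Fin n)) :=
  ⋃ α ∈ D.Φ, ⋃ k : ℤ, wall α k

/-- A vertex of the Stiefel diagram: a point lying on `n` walls whose roots are linearly
independent (hence the unique point of the intersection of these walls). -/
def IsVertex (v : EuclideanSpace ℝ (Fin n)) : Prop :=
  ∃ θ : Fin n → EuclideanSpace ℝ (Fin n),
    (∀ i, θ i ∈ D.Φ) ∧ LinearIndependent ℝ θ ∧ ∀ i, ∃ k : ℤ, ⟪θ i, v⟫ = (k : ℝ)

/-- Two vertices of the Stiefel diagram are joined by an edge: they are the endpoints of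
a `1`-face, i.e. they lie on `n − 1` common walls with linearly independent roots, and
every wall meeting the open segment between them contains both of them. -/
def JoinedByEdge (v w : EuclideanSpace ℝ (Fin n)) : Prop :=
  D.IsVertex v ∧ D.IsVertex w ∧ v ≠ w ∧
    (∃ s : Finset (EuclideanSpace ℝ (Fin n)), s ⊆ D.Φ ∧ s.card = n - 1 ∧
      LinearIndependent ℝ (Subtype.val : {x // x ∈ s} → EuclideanSpace ℝ (Fin n)) ∧
      ∀ α ∈ s, ∃ k : ℤ, ⟪α, v⟫ = (k : ℝ) ∧ ⟪α, w⟫ = (k : ℝ)) ∧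
    ∀ x ∈ openSegment ℝ v w, ∀ α ∈ D.Φ, ∀ k : ℤ,
      ⟪α, x⟫ = (k : ℝ) → (⟪α, v⟫ = (k : ℝ) ∧ ⟪α, w⟫ = (k : ℝ))

end RootSystemData

end

noncomputable section

namespace RootSystemData

variable {n : ℕ} (D : RootSystemData n)

/-- A Weyl alcove: a connected component of the complement of the Stiefel diagram. -/
def IsAlcove (A : Set (EuclideanSpace ℝ (Fin n))) : Prop :=
  ∃ x, x ∉ D.stiefelDiagram ∧ A = connectedComponentIn D.stiefelDiagramᶜ x

/-- `𝒫`: the union of the closures of all Weyl alcoves around the origin (i.e. whose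
closure contains `0`). -/
def alcoveStar : Set (EuclideanSpace ℝ (Fin n)) :=
  {x | ∃ A, D.IsAlcove A ∧ (0 : EuclideanSpace ℝ (Fin n)) ∈ closure A ∧ x ∈ closure A}

/-- A (nonempty) face of the simplicial polytope `𝒫`: the intersection of the closure
of one of the alcoves around the origin with a collection of walls of the Stiefel
diagram. -/
def IsFaceOfStar (σ : Set (EuclideanSpace ℝ (Fin n))) : Prop :=
  σ.Nonempty ∧ ∃ A, D.IsAlcove A ∧ (0 : EuclideanSpace ℝ (Fin n)) ∈ closure A ∧
    ∃ s : Finset (EuclideanSpace ℝ (Fin n) × ℤ), (∀ p ∈ s, p.1 ∈ D.Φ) ∧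
      σ = closure A ∩ ⋂ p ∈ s, wall p.1 p.2

/-- The coroot lattice `L`, generated by the coroots `α^∨ = 2α/⟪α,α⟫`; since `G` is
simply-connected this is the integer lattice of `𝔱`. -/
def corootLattice : AddSubgroup (EuclideanSpace ℝ (Fin n)) :=
  AddSubgroup.closure {x | ∃ α ∈ D.Φ, x = (2 / ⟪α, α⟫) • α}

end RootSystemData

end

/- ===== auxiliary development ===== -/

noncomputable section Aux

open scoped Classical

namespace RootSystemData

variable {n : ℕ}

local notation "V" => EuclideanSpace ℝ (Fin n)

/-- The coroot of a vector. -/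
def cv (γ : V) : V := (2 / ⟪γ, γ⟫) • γ

lemma inner_cv (γ x : V) : ⟪cv γ, x⟫ = 2 * ⟪γ, x⟫ / ⟪γ, γ⟫ := by
  rw [cv, real_inner_smul_left]; ring

lemma inner_cv_right (γ x : V) : ⟪x, cv γ⟫ = 2 * ⟪γ, x⟫ / ⟪γ, γ⟫ := by
  rw [real_inner_comm, inner_cv]

lemma cv_neg (γ : V) : cv (-γ) = - cv γ := by
  rw [cv, cv, inner_neg_neg, smul_neg]

variable (D : RootSystemData n)

lemma root_inner_self_pos {γ : V} (hγ : γ ∈ D.Φ) : 0 < ⟪γ, γ⟫ := by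
  rcases lt_or_eq_of_le (real_inner_self_nonneg (x := γ)) with h | h
  · exact h
  · exact absurd (inner_self_eq_zero.mp h.symm) (D.ne_zero γ hγ)

lemma inner_cv_self {γ : V} (hγ : γ ∈ D.Φ) : ⟪γ, cv γ⟫ = 2 := by
  have h := D.root_inner_self_pos hγ
  rw [inner_cv_right, mul_div_assoc, div_self h.ne', mul_one]

lemma cv_mem_lattice {γ : V} (hγ : γ ∈ D.Φ) : cv γ ∈ D.corootLattice :=
  AddSubgroup.subset_closure ⟨γ, hγ, rfl⟩

/-- Pairings of roots with lattice elements are integers. -/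
lemma lattice_pairing_int : ∀ b ∈ D.corootLattice, ∀ α ∈ D.Φ, ∃ k : ℤ, ⟪α, b⟫ = (k : ℝ) := by
  have : D.corootLattice ≤
      { carrier := {b : V | ∀ α ∈ D.Φ, ∃ k : ℤ, ⟪α, b⟫ = (k : ℝ)}
        zero_mem' := fun α _ => ⟨0, by simp⟩
        add_mem' := by
          intro x y hx hy α hα
          obtain ⟨k, hk⟩ := hx α hα
          obtain ⟨l, hl⟩ := hy α hα
          exact ⟨k + l, by rw [inner_add_right, hk, hl]; push_cast; ring⟩
        neg_mem' := by
          intro x hx α hα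
          obtain ⟨k, hk⟩ := hx α hα
          exact ⟨-k, by rw [inner_neg_right, hk]; push_cast; ring⟩ } := by
    rw [corootLattice, AddSubgroup.closure_le]
    rintro x ⟨γ, hγ, rfl⟩ α hα
    obtain ⟨k, hk⟩ := D.crystallographic γ hγ α hα
    exact ⟨k, by rw [real_inner_smul_right, ← hk]; ring⟩
  exact fun b hb => this hb

/-- A vector orthogonal to all roots is zero. -/
lemma eq_zero_of_inner_root_zero {b : V} (h : ∀ α ∈ D.Φ, ⟪α, b⟫ = 0) : b = 0 := by
  have hb : b ∈ Submodule.span ℝ (D.Φ : Set V) := by rw [D.span_top]; trivial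
  have key : ∀ x ∈ Submodule.span ℝ (D.Φ : Set V), ⟪x, b⟫ = 0 := by
    intro x hx
    induction hx using Submodule.span_induction with
    | mem x hx => exact h x hx
    | zero => simp
    | add x y _ _ hx hy => rw [inner_add_left, hx, hy]; ring
    | smul c x _ hx => rw [real_inner_smul_left, hx]; ring
  have := key b hb
  exact inner_self_eq_zero.mp this

end RootSystemData

end Aux
noncomputable section Aux2

open scoped Classical

namespace RootSystemData

variable {n : ℕ}

local notation "V" => EuclideanSpace ℝ (Fin n)

/-- Existence of a generic vector. -/
lemma exists_generic (s : Finset V) (hs : ∀ α ∈ s, α ≠ 0) :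
    ∃ v : V, ∀ α ∈ s, ⟪α, v⟫ ≠ 0 := by
  induction s using Finset.induction with
  | empty => exact ⟨0, by simp⟩
  | @insert β s hβs ih =>
    obtain ⟨v, hv⟩ := ih (fun α hα => hs α (Finset.mem_insert_of_mem hα))
    have hβ : β ≠ 0 := hs β (Finset.mem_insert_self β s)
    have hββ : (0 : ℝ) < ⟪β, β⟫ := by
      rcases lt_or_eq_of_le (real_inner_self_nonneg (x := β)) with h | h
      · exact h
      · exact absurd (inner_self_eq_zero.mp h.symm) hβ
    set B : Finset ℝ := insert (-⟪β, v⟫ / ⟪β, β⟫) (s.image (fun α => -⟪α, v⟫ / ⟪α, β⟫)) with hB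
    obtain ⟨ε, hε⟩ := Infinite.exists_notMem_finset B
    refine ⟨v + ε • β, ?_⟩
    intro α hα
    rcases Finset.mem_insert.mp hα with rfl | hαs
    · rw [inner_add_right, real_inner_smul_right]
      intro hcon
      apply hε
      have hval : -⟪α, v⟫ / ⟪α, α⟫ = ε := by
        rw [div_eq_iff hββ.ne']
        linear_combination -hcon
      rw [hB]
      exact hval ▸ Finset.mem_insert_self _ _
    · rw [inner_add_right, real_inner_smul_right]
      by_cases hab : ⟪α, β⟫ = 0
      · rw [hab]
        simp only [mul_zero, add_zero]
        exact hv α hαs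
      · intro hcon
        apply hε
        rw [hB]
        apply Finset.mem_insert_of_mem
        apply Finset.mem_image.mpr
        refine ⟨α, hαs, ?_⟩
        rw [div_eq_iff hab]
        linear_combination -hcon

variable (D : RootSystemData n)

/-- The finite set of "minuscule" lattice points. -/
def MinSet : Set V :=
  {b | b ∈ D.corootLattice ∧ ∀ α ∈ D.Φ, ⟪α, b⟫ = 0 ∨ ⟪α, b⟫ = 1 ∨ ⟪α, b⟫ = -1}

lemma minSet_finite : (D.MinSet).Finite := by
  set F : V → (D.Φ → ℝ) := fun b α => ⟪(α : V), b⟫ with hF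
  have hinj : Function.Injective F := by
    intro b b' h
    have : ∀ α ∈ D.Φ, ⟪α, b - b'⟫ = 0 := by
      intro α hα
      have := congrFun h ⟨α, hα⟩
      simp only [hF] at this
      rw [inner_sub_right, this, sub_self]
    have := D.eq_zero_of_inner_root_zero this
    rwa [sub_eq_zero] at this
  have hT : (Set.pi Set.univ (fun _ : D.Φ => ({0, 1, -1} : Set ℝ))).Finite :=
    Set.Finite.pi (fun _ => (by norm_num : ({0, 1, -1} : Set ℝ).Finite))
  apply Set.Finite.subset ((hT.preimage hinj.injOn))
  intro b hb
  intro α _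
  exact hb.2 α α.2

lemma minSet_neg {b : V} (hb : b ∈ D.MinSet) : -b ∈ D.MinSet := by
  refine ⟨AddSubgroup.neg_mem _ hb.1, fun α hα => ?_⟩
  rw [inner_neg_right]
  rcases hb.2 α hα with h | h | h <;> rw [h] <;> norm_num

/-- Reflection stability of `MinSet`. -/
lemma minSet_reflect {b : V} (hb : b ∈ D.MinSet) {γ : V} (hγ : γ ∈ D.Φ) :
    b - ⟪γ, b⟫ • cv γ ∈ D.MinSet := by
  have hG := D.root_inner_self_pos hγ
  constructor
  · rcases hb.2 γ hγ with h | h | h <;> rw [h]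
    · simpa using hb.1
    · rw [one_smul]; exact sub_mem hb.1 (D.cv_mem_lattice hγ)
    · have : b - (-1 : ℝ) • cv γ = b + cv γ := by
        rw [neg_one_smul, sub_neg_eq_add]
      rw [this]; exact add_mem hb.1 (D.cv_mem_lattice hγ)
  · intro β hβ
    have hrefl := D.reflect_mem γ hγ β hβ
    have key : ⟪β, b - ⟪γ, b⟫ • cv γ⟫ = ⟪β - (2 * ⟪β, γ⟫ / ⟪γ, γ⟫) • γ, b⟫ := by
      rw [inner_sub_right, inner_sub_left, real_inner_smul_right, real_inner_smul_left,
        inner_cv_right, real_inner_comm γ β]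
      ring
    rw [key]
    exact hb.2 _ hrefl

end RootSystemData

end Aux2
noncomputable section Aux3

open scoped Classical

namespace RootSystemData

variable {n : ℕ}

local notation "V" => EuclideanSpace ℝ (Fin n)

variable (D : RootSystemData n)

/-- Positive coroots relative to a generic vector `v`. -/
def PosCo (v : V) : Finset V := (D.Φ.filter (fun γ => 0 < ⟪γ, v⟫)).image cv

/-- Simple (indecomposable) positive coroots. -/
def Simple (v : V) : Finset V :=
  (D.PosCo v).filter (fun η => ¬ ∃ x ∈ D.PosCo v, ∃ y ∈ D.PosCo v, η = x + y)

lemma mem_posCo_iff {v η : V} :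
    η ∈ D.PosCo v ↔ ∃ γ ∈ D.Φ, 0 < ⟪γ, v⟫ ∧ η = cv γ := by
  simp only [PosCo, Finset.mem_image, Finset.mem_filter]
  constructor
  · rintro ⟨γ, ⟨h1, h2⟩, rfl⟩; exact ⟨γ, h1, h2, rfl⟩
  · rintro ⟨γ, h1, h2, rfl⟩; exact ⟨γ, ⟨h1, h2⟩, rfl⟩

lemma posCo_inner_v_pos {v η : V} (h : η ∈ D.PosCo v) : 0 < ⟪η, v⟫ := by
  obtain ⟨γ, hγ, hγv, rfl⟩ := (D.mem_posCo_iff).mp h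
  rw [inner_cv]
  exact div_pos (by linarith) (D.root_inner_self_pos hγ)

lemma simple_subset_posCo {v : V} : D.Simple v ⊆ D.PosCo v := Finset.filter_subset _ _

/-- If `2⟪α,β⟫ = ⟪α,α⟫` then `cv α - cv β` is again a coroot. -/
lemma cv_sub_mem {α β : V} (hα : α ∈ D.Φ) (hβ : β ∈ D.Φ)
    (h : 2 * ⟪α, β⟫ = ⟪α, α⟫) : ∃ ζ ∈ D.Φ, cv ζ = cv α - cv β := by
  have hA := D.root_inner_self_pos hα
  have hB := D.root_inner_self_pos hβ
  refine ⟨α - (2 * ⟪α, β⟫ / ⟪β, β⟫) • β, D.reflect_mem β hβ α hα, ?_⟩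
  have hζζ : ⟪α - (2 * ⟪α, β⟫ / ⟪β, β⟫) • β, α - (2 * ⟪α, β⟫ / ⟪β, β⟫) • β⟫ = ⟪α, α⟫ := by
    simp only [inner_sub_left, inner_sub_right, real_inner_smul_left, real_inner_smul_right,
      real_inner_comm α β]
    set p := ⟪α, β⟫ with hp
    set a := ⟪α, α⟫ with ha
    set b := ⟪β, β⟫ with hb
    field_simp
    ring
  rw [cv, hζζ, smul_sub, smul_smul, cv, cv]
  have hsc : 2 / ⟪α, α⟫ * (2 * ⟪α, β⟫ / ⟪β, β⟫) = 2 / ⟪β, β⟫ := by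
    set p := ⟪α, β⟫ with hp
    set a := ⟪α, α⟫ with ha
    set b := ⟪β, β⟫ with hb
    rw [div_mul_div_comm, div_eq_div_iff (by positivity) hB.ne']
    linear_combination 2 * b * h
  rw [hsc]

/-- Obtuseness of distinct simple coroots. -/
lemma simple_obtuse {v : V} (hv : ∀ α ∈ D.Φ, ⟪α, v⟫ ≠ 0)
    {η η' : V} (hη : η ∈ D.Simple v) (hη' : η' ∈ D.Simple v) (hne : η ≠ η') :
    ⟪η, η'⟫ ≤ 0 := by
  by_contra hpos
  push_neg at hpos
  have hηP := D.simple_subset_posCo hη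
  have hη'P := D.simple_subset_posCo hη'
  obtain ⟨α, hα, hαv, rfl⟩ := (D.mem_posCo_iff).mp hηP
  obtain ⟨β, hβ, hβv, rfl⟩ := (D.mem_posCo_iff).mp hη'P
  have hA := D.root_inner_self_pos hα
  have hB := D.root_inner_self_pos hβ
  rw [inner_cv, inner_cv_right] at hpos
  have hip' : 0 < ⟪β, α⟫ := by
    by_contra hle
    push_neg at hle
    have h1 : 2 * ⟪β, α⟫ / ⟪β, β⟫ ≤ 0 := div_nonpos_of_nonpos_of_nonneg (by linarith) hB.le
    have h2 : 2 * (2 * ⟪β, α⟫ / ⟪β, β⟫) / ⟪α, α⟫ ≤ 0 :=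
      div_nonpos_of_nonpos_of_nonneg (by linarith) hA.le
    linarith
  have hip : 0 < ⟪α, β⟫ := by rwa [real_inner_comm] at hip'
  obtain ⟨k₁, hk₁⟩ := D.crystallographic α hα β hβ
  obtain ⟨k₂, hk₂⟩ := D.crystallographic β hβ α hα
  have hk₁pos : 0 < k₁ := by
    have h0 : (0:ℝ) < (k₁:ℝ) := by
      rw [← hk₁]
      exact div_pos (by linarith) hA
    exact_mod_cast h0
  have hk₂pos : 0 < k₂ := by
    have h0 : (0:ℝ) < (k₂:ℝ) := by
      rw [← hk₂]
      exact div_pos (by linarith) hB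
    exact_mod_cast h0
  have hcs : ⟪α, β⟫ * ⟪α, β⟫ ≤ ⟪α, α⟫ * ⟪β, β⟫ := real_inner_mul_inner_self_le α β
  have hstrict : ⟪α, β⟫ * ⟪α, β⟫ < ⟪α, α⟫ * ⟪β, β⟫ := by
    rcases lt_or_eq_of_le hcs with hlt | heq
    · exact hlt
    · exfalso
      have hnα : (0:ℝ) < ‖α‖ := norm_pos_iff.mpr (D.ne_zero α hα)
      have hnβ : (0:ℝ) < ‖β‖ := norm_pos_iff.mpr (D.ne_zero β hβ)
      have h2 : ‖α‖ * ‖β‖ * (‖α‖ * ‖β‖) = ⟪α, α⟫ * ⟪β, β⟫ := by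
        rw [real_inner_self_eq_norm_mul_norm, real_inner_self_eq_norm_mul_norm]
        ring
      have hn : ⟪α, β⟫ = ‖α‖ * ‖β‖ := by
        have h1 : (0:ℝ) < ‖α‖ * ‖β‖ := mul_pos hnα hnβ
        nlinarith [hip, heq, h2]
      have hdep := inner_eq_norm_mul_iff_real.mp hn
      have hα0 : ‖α‖ ≠ 0 := hnα.ne'
      have hβeq : (‖β‖ / ‖α‖) • α = β := by
        rw [div_eq_mul_inv, mul_comm, mul_smul, hdep, inv_smul_smul₀ hα0]
      rcases D.reduced α hα _ (hβeq ▸ hβ) with hc | hc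
      · rw [hc, one_smul] at hβeq
        exact hne (by rw [hβeq])
      · have hq : (0:ℝ) < ‖β‖ / ‖α‖ := div_pos hnβ hnα
        rw [hc] at hq
        norm_num at hq
  have hprod : k₁ * k₂ < 4 := by
    have hcast : (k₁ : ℝ) * (k₂ : ℝ) < 4 := by
      rw [← hk₁, ← hk₂, real_inner_comm α β, div_mul_div_comm,
        div_lt_iff₀ (mul_pos hA hB)]
      nlinarith [hstrict]
    exact_mod_cast hcast
  have hone : k₁ = 1 ∨ k₂ = 1 := by
    by_contra hcon
    push_neg at hcon
    have h1 : 2 ≤ k₁ := by omega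
    have h2 : 2 ≤ k₂ := by omega
    nlinarith
  have key : ∃ ζ ∈ D.Φ, cv ζ = cv α - cv β ∨ cv ζ = cv β - cv α := by
    rcases hone with h | h
    · have heq1 : 2 * ⟪α, β⟫ = ⟪α, α⟫ := by
        have h2 : 2 * ⟪β, α⟫ / ⟪α, α⟫ = 1 := by rw [hk₁, h]; norm_num
        rw [div_eq_one_iff_eq hA.ne'] at h2
        rw [real_inner_comm β α]
        exact h2
      obtain ⟨ζ, hζ, hζeq⟩ := D.cv_sub_mem hα hβ heq1
      exact ⟨ζ, hζ, Or.inl hζeq⟩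
    · have heq2 : 2 * ⟪β, α⟫ = ⟪β, β⟫ := by
        have h2 : 2 * ⟪α, β⟫ / ⟪β, β⟫ = 1 := by rw [hk₂, h]; norm_num
        rw [div_eq_one_iff_eq hB.ne'] at h2
        rw [real_inner_comm α β]
        exact h2
      obtain ⟨ζ, hζ, hζeq⟩ := D.cv_sub_mem hβ hα heq2
      exact ⟨ζ, hζ, Or.inr hζeq⟩
  obtain ⟨ζ, hζ, hζeq⟩ := key
  have hζv := hv ζ hζ
  have hdecomp : ∀ ξ ∈ D.PosCo v, ∀ x ∈ D.PosCo v, ∀ y ∈ D.PosCo v, ξ = x + y →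
      ξ ∉ D.Simple v := by
    intro ξ hξ x hx y hy hxy hsimple
    rw [Simple, Finset.mem_filter] at hsimple
    exact hsimple.2 ⟨x, hx, y, hy, hxy⟩
  rcases lt_or_gt_of_ne hζv with hneg | hposv
  · have hζ' : -ζ ∈ D.Φ := D.neg_mem ζ hζ
    have hm : cv (-ζ) ∈ D.PosCo v := (D.mem_posCo_iff).mpr ⟨-ζ, hζ', by
      rw [inner_neg_left]; linarith, rfl⟩
    rw [cv_neg] at hm
    rcases hζeq with h | h
    · have hd : cv β = cv α + (-(cv ζ)) := by rw [h]; abel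
      exact hdecomp _ hη'P _ hηP _ hm hd hη'
    · have hd : cv α = cv β + (-(cv ζ)) := by rw [h]; abel
      exact hdecomp _ hηP _ hη'P _ hm hd hη
  · have hm : cv ζ ∈ D.PosCo v := (D.mem_posCo_iff).mpr ⟨ζ, hζ, hposv, rfl⟩
    rcases hζeq with h | h
    · have hd : cv α = cv β + cv ζ := by rw [h]; abel
      exact hdecomp _ hηP _ hη'P _ hm hd hη
    · have hd : cv β = cv α + cv ζ := by rw [h]; abel
      exact hdecomp _ hη'P _ hηP _ hm hd hη'

/-- Inner product with a multiset sum. -/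
lemma inner_multiset_sum_right (x : V) (l : Multiset V) :
    ⟪x, l.sum⟫ = (l.map (fun y => ⟪x, y⟫)).sum := by
  induction l using Multiset.induction with
  | empty => simp
  | cons a l ih => simp [inner_add_right, ih]

lemma inner_multiset_sum_left (x : V) (l : Multiset V) :
    ⟪l.sum, x⟫ = (l.map (fun y => ⟪y, x⟫)).sum := by
  induction l using Multiset.induction with
  | empty => simp
  | cons a l ih => simp [inner_add_left, ih]

lemma sum_map_nonpos {l : Multiset V} {f : V → ℝ} (h : ∀ x ∈ l, f x ≤ 0) :
    (l.map f).sum ≤ 0 := by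
  induction l using Multiset.induction with
  | empty => simp
  | cons a l ih =>
    rw [Multiset.map_cons, Multiset.sum_cons]
    have h1 := h a (Multiset.mem_cons_self a l)
    have h2 := ih (fun x hx => h x (Multiset.mem_cons_of_mem hx))
    linarith

lemma exists_pos_of_sum_pos {l : Multiset V} {f : V → ℝ} (h : 0 < (l.map f).sum) :
    ∃ x ∈ l, 0 < f x := by
  by_contra hc
  push_neg at hc
  have hle := sum_map_nonpos hc
  linarith

end RootSystemData

end Aux3
noncomputable section Aux4

open scoped Classical

namespace RootSystemData

variable {n : ℕ}

local notation "V" => EuclideanSpace ℝ (Fin n)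

variable (D : RootSystemData n)

/-- Every positive coroot is a multiset sum of simple coroots. -/
lemma posCo_repr {v : V} : ∀ η ∈ D.PosCo v,
    ∃ l : Multiset V, (∀ x ∈ l, x ∈ D.Simple v) ∧ η = l.sum := by
  have key : ∀ N : ℕ, ∀ η ∈ D.PosCo v,
      ((D.PosCo v).filter (fun φ => ⟪φ, v⟫ < ⟪η, v⟫)).card ≤ N →
      ∃ l : Multiset V, (∀ x ∈ l, x ∈ D.Simple v) ∧ η = l.sum := by
    intro N
    induction N with
    | zero =>
      intro η hη hcard
      by_cases hs : η ∈ D.Simple v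
      · exact ⟨{η}, by simpa using hs, by simp⟩
      · exfalso
        rw [Simple, Finset.mem_filter, not_and, not_not] at hs
        obtain ⟨x, hx, y, hy, hxy⟩ := hs hη
        have hxv := D.posCo_inner_v_pos hx
        have hyv := D.posCo_inner_v_pos hy
        have hlt : ⟪x, v⟫ < ⟪η, v⟫ := by rw [hxy, inner_add_left]; linarith
        have hmem : x ∈ (D.PosCo v).filter (fun φ => ⟪φ, v⟫ < ⟪η, v⟫) :=
          Finset.mem_filter.mpr ⟨hx, hlt⟩
        have := Finset.card_pos.mpr ⟨x, hmem⟩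
        omega
    | succ N ih =>
      intro η hη hcard
      by_cases hs : η ∈ D.Simple v
      · exact ⟨{η}, by simpa using hs, by simp⟩
      · rw [Simple, Finset.mem_filter, not_and, not_not] at hs
        obtain ⟨x, hx, y, hy, hxy⟩ := hs hη
        have hxv := D.posCo_inner_v_pos hx
        have hyv := D.posCo_inner_v_pos hy
        have hltx : ⟪x, v⟫ < ⟪η, v⟫ := by rw [hxy, inner_add_left]; linarith
        have hlty : ⟪y, v⟫ < ⟪η, v⟫ := by rw [hxy, inner_add_left]; linarith
        have hsub : ∀ z, z ∈ D.PosCo v → ⟪z, v⟫ < ⟪η, v⟫ →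
            ((D.PosCo v).filter (fun φ => ⟪φ, v⟫ < ⟪z, v⟫)).card ≤ N := by
          intro z hz hzlt
          have hsubset : (D.PosCo v).filter (fun φ => ⟪φ, v⟫ < ⟪z, v⟫) ⊆
              (D.PosCo v).filter (fun φ => ⟪φ, v⟫ < ⟪η, v⟫) := by
            intro φ hφ
            rw [Finset.mem_filter] at hφ ⊢
            exact ⟨hφ.1, by linarith [hφ.2]⟩
          have hss : (D.PosCo v).filter (fun φ => ⟪φ, v⟫ < ⟪z, v⟫) ⊂
              (D.PosCo v).filter (fun φ => ⟪φ, v⟫ < ⟪η, v⟫) := by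
            rw [Finset.ssubset_iff_of_subset hsubset]
            exact ⟨z, Finset.mem_filter.mpr ⟨hz, hzlt⟩, by
              intro hcon
              exact absurd (Finset.mem_filter.mp hcon).2 (lt_irrefl _)⟩
          have := Finset.card_lt_card hss
          omega
        obtain ⟨lx, hlx, hlxe⟩ := ih x hx (hsub x hx hltx)
        obtain ⟨ly, hly, hlye⟩ := ih y hy (hsub y hy hlty)
        refine ⟨lx + ly, ?_, ?_⟩
        · intro z hz
          rcases Multiset.mem_add.mp hz with h | h
          exacts [hlx z h, hly z h]
        · rw [Multiset.sum_add, hxy, hlxe, hlye]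
  intro η hη
  exact key _ η hη le_rfl

/-- Representation of lattice elements as difference of simple-coroot sums. -/
lemma lattice_repr {v : V} (hv : ∀ α ∈ D.Φ, ⟪α, v⟫ ≠ 0) :
    ∀ m ∈ D.corootLattice, ∃ l₁ l₂ : Multiset V,
      (∀ x ∈ l₁, x ∈ D.Simple v) ∧ (∀ x ∈ l₂, x ∈ D.Simple v) ∧ m = l₁.sum - l₂.sum := by
  have hle : D.corootLattice ≤
      { carrier := {m : V | ∃ l₁ l₂ : Multiset V,
          (∀ x ∈ l₁, x ∈ D.Simple v) ∧ (∀ x ∈ l₂, x ∈ D.Simple v) ∧ m = l₁.sum - l₂.sum}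
        zero_mem' := ⟨0, 0, by simp, by simp, by simp⟩
        add_mem' := by
          rintro x y ⟨a1, a2, h1, h2, rfl⟩ ⟨b1, b2, g1, g2, rfl⟩
          refine ⟨a1 + b1, a2 + b2, ?_, ?_, ?_⟩
          · intro z hz
            rcases Multiset.mem_add.mp hz with h | h
            exacts [h1 z h, g1 z h]
          · intro z hz
            rcases Multiset.mem_add.mp hz with h | h
            exacts [h2 z h, g2 z h]
          · rw [Multiset.sum_add, Multiset.sum_add]
            abel
        neg_mem' := by
          rintro x ⟨a1, a2, h1, h2, rfl⟩
          exact ⟨a2, a1, h2, h1, by abel⟩ } := by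
    rw [corootLattice, AddSubgroup.closure_le]
    rintro x ⟨γ, hγ, rfl⟩
    have hcveq : (2 / ⟪γ, γ⟫) • γ = cv γ := rfl
    rcases lt_or_gt_of_ne (hv γ hγ) with hneg | hposv
    · have hγ' : -γ ∈ D.Φ := D.neg_mem γ hγ
      have hmem : cv (-γ) ∈ D.PosCo v := (D.mem_posCo_iff).mpr ⟨-γ, hγ', by
        rw [inner_neg_left]; linarith, rfl⟩
      obtain ⟨l, hl, hlsum⟩ := D.posCo_repr _ hmem
      refine ⟨0, l, by simp, hl, ?_⟩
      show (2 / ⟪γ, γ⟫) • γ = (0 : Multiset V).sum - l.sum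
      rw [hcveq, Multiset.sum_zero, ← hlsum, cv_neg]
      abel
    · have hmem : cv γ ∈ D.PosCo v := (D.mem_posCo_iff).mpr ⟨γ, hγ, hposv, rfl⟩
      obtain ⟨l, hl, hlsum⟩ := D.posCo_repr _ hmem
      refine ⟨l, 0, hl, by simp, ?_⟩
      show (2 / ⟪γ, γ⟫) • γ = l.sum - (0 : Multiset V).sum
      rw [hcveq, Multiset.sum_zero, ← hlsum]
      abel
  exact fun m hm => hle hm

/-- A dominant lattice element is an ℕ-combination of simple coroots. -/
lemma dominant_repr {v : V} (hv : ∀ α ∈ D.Φ, ⟪α, v⟫ ≠ 0) {m : V}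
    (hm : m ∈ D.corootLattice) (hdom : ∀ η ∈ D.PosCo v, 0 ≤ ⟪η, m⟫) :
    ∃ l : Multiset V, (∀ x ∈ l, x ∈ D.Simple v) ∧ m = l.sum := by
  have hex : ∃ c : ℕ, ∃ l₁ l₂ : Multiset V,
      (∀ x ∈ l₁, x ∈ D.Simple v) ∧ (∀ x ∈ l₂, x ∈ D.Simple v) ∧
      m = l₁.sum - l₂.sum ∧ Multiset.card l₁ + Multiset.card l₂ = c := by
    obtain ⟨l₁, l₂, h1, h2, h3⟩ := D.lattice_repr hv m hm
    exact ⟨_, l₁, l₂, h1, h2, h3, rfl⟩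
  obtain ⟨l₁, l₂, h1, h2, h3, hc⟩ := Nat.find_spec hex
  have hdisj : ∀ x, ¬(x ∈ l₁ ∧ x ∈ l₂) := by
    rintro x ⟨hx1, hx2⟩
    have e1 : l₁.sum = x + (l₁.erase x).sum := by
      rw [← Multiset.sum_cons, Multiset.cons_erase hx1]
    have e2 : l₂.sum = x + (l₂.erase x).sum := by
      rw [← Multiset.sum_cons, Multiset.cons_erase hx2]
    have hm' : m = (l₁.erase x).sum - (l₂.erase x).sum := by
      rw [h3, e1, e2]; abel
    have hc1 : 0 < Multiset.card l₁ := Multiset.card_pos_iff_exists_mem.mpr ⟨x, hx1⟩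
    have hc2 : 0 < Multiset.card l₂ := Multiset.card_pos_iff_exists_mem.mpr ⟨x, hx2⟩
    have hcard : Multiset.card (l₁.erase x) + Multiset.card (l₂.erase x) < Nat.find hex := by
      have e3 := Multiset.card_erase_of_mem hx1
      have e4 := Multiset.card_erase_of_mem hx2
      rw [Nat.pred_eq_sub_one] at e3 e4
      omega
    exact Nat.find_min hex hcard ⟨_, _,
      (fun y hy => h1 y (Multiset.mem_of_mem_erase hy)),
      (fun y hy => h2 y (Multiset.mem_of_mem_erase hy)), hm', rfl⟩
  have hN1 : 0 ≤ ⟪m, l₂.sum⟫ := by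
    rw [inner_multiset_sum_right]
    apply Multiset.sum_nonneg
    intro t ht
    obtain ⟨y, hy, rfl⟩ := Multiset.mem_map.mp ht
    rw [real_inner_comm y m]
    exact hdom y (D.simple_subset_posCo (h2 y hy))
  have hPN : ⟪l₁.sum, l₂.sum⟫ ≤ 0 := by
    rw [inner_multiset_sum_left]
    apply sum_map_nonpos
    intro x hx
    rw [inner_multiset_sum_right]
    apply sum_map_nonpos
    intro y hy
    have hxy : x ≠ y := fun he => hdisj x ⟨hx, he ▸ hy⟩
    exact D.simple_obtuse hv (h1 x hx) (h2 y hy) hxy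
  have hNN : ⟪l₂.sum, l₂.sum⟫ ≤ 0 := by
    have he : l₂.sum = l₁.sum - m := by rw [h3]; abel
    nth_rewrite 1 [he]
    rw [inner_sub_left]
    linarith
  have hz : l₂.sum = 0 := inner_self_eq_zero.mp (le_antisymm hNN real_inner_self_nonneg)
  exact ⟨l₁, h1, by rw [h3, hz, sub_zero]⟩

/-- The key descent: a "minuscule" ℕ-combination of simple coroots is zero. -/
lemma core_descent {v : V} : ∀ N : ℕ, ∀ l : Multiset V, Multiset.card l ≤ N →
    (∀ x ∈ l, x ∈ D.Simple v) →
    (∀ α ∈ D.Φ, ⟪α, l.sum⟫ = 0 ∨ ⟪α, l.sum⟫ = 1 ∨ ⟪α, l.sum⟫ = -1) →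
    l.sum = 0 := by
  intro N
  induction N with
  | zero =>
    intro l hcard _ _
    rw [Multiset.card_eq_zero.mp (Nat.le_zero.mp hcard)]
    simp
  | succ N ih =>
    intro l hcard hl hmin
    by_cases h0 : l.sum = 0
    · exact h0
    · exfalso
      have hpos : 0 < ⟪l.sum, l.sum⟫ := by
        rcases lt_or_eq_of_le (real_inner_self_nonneg (x := l.sum)) with h | h
        · exact h
        · exact absurd (inner_self_eq_zero.mp h.symm) h0
      rw [inner_multiset_sum_left] at hpos
      obtain ⟨η₀, hη₀l, hη₀pos⟩ := exists_pos_of_sum_pos hpos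
      have hη₀S := hl η₀ hη₀l
      obtain ⟨γ₀, hγ₀, hγ₀v, hcv⟩ := (D.mem_posCo_iff).mp (D.simple_subset_posCo hη₀S)
      have hG := D.root_inner_self_pos hγ₀
      have hγl : ⟪γ₀, l.sum⟫ = 1 := by
        have hp : 0 < ⟪γ₀, l.sum⟫ := by
          rw [hcv, inner_cv] at hη₀pos
          by_contra hcon
          push_neg at hcon
          have : 2 * ⟪γ₀, l.sum⟫ / ⟪γ₀, γ₀⟫ ≤ 0 :=
            div_nonpos_of_nonpos_of_nonneg (by linarith) hG.le
          linarith
        rcases hmin γ₀ hγ₀ with h | h | h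
        · exfalso; rw [h] at hp; linarith
        · exact h
        · exfalso; rw [h] at hp; linarith
      have hsum : l.sum = η₀ + (l.erase η₀).sum := by
        rw [← Multiset.sum_cons, Multiset.cons_erase hη₀l]
      have hl' : ∀ x ∈ l.erase η₀, x ∈ D.Simple v :=
        fun x hx => hl x (Multiset.mem_of_mem_erase hx)
      have hcard' : Multiset.card (l.erase η₀) ≤ N := by
        have e := Multiset.card_erase_of_mem hη₀l
        rw [Nat.pred_eq_sub_one] at e
        have hc1 : 0 < Multiset.card l := Multiset.card_pos_iff_exists_mem.mpr ⟨η₀, hη₀l⟩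
        omega
      have hmin' : ∀ β ∈ D.Φ, ⟪β, (l.erase η₀).sum⟫ = 0 ∨ ⟪β, (l.erase η₀).sum⟫ = 1 ∨
          ⟪β, (l.erase η₀).sum⟫ = -1 := by
        intro β hβ
        have hrefl := D.reflect_mem γ₀ hγ₀ β hβ
        have key : ⟪β, (l.erase η₀).sum⟫ = ⟪β - (2 * ⟪β, γ₀⟫ / ⟪γ₀, γ₀⟫) • γ₀, l.sum⟫ := by
          have he : (l.erase η₀).sum = l.sum - η₀ := by rw [hsum]; abel
          rw [he, inner_sub_right, hcv, inner_cv_right, inner_sub_left,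
            real_inner_smul_left, hγl, real_inner_comm β γ₀]
          ring
        rw [key]
        exact hmin _ hrefl
      have hzero := ih (l.erase η₀) hcard' hl' hmin'
      rw [hzero, add_zero] at hsum
      rw [hsum, hcv, D.inner_cv_self hγ₀] at hγl
      norm_num at hγl

/-- Lemma M : the only lattice point with all root-pairings in `[-1,1]` is `0`. -/
lemma lattice_small_eq_zero {a : V} (ha : a ∈ D.corootLattice)
    (hbd : ∀ α ∈ D.Φ, |⟪α, a⟫| ≤ 1) : a = 0 := by
  by_contra ha0
  have haM : a ∈ D.MinSet := by
    refine ⟨ha, fun α hα => ?_⟩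
    obtain ⟨k, hk⟩ := D.lattice_pairing_int a ha α hα
    have h1 := hbd α hα
    rw [hk] at h1 ⊢
    rw [abs_le] at h1
    have hk1 : (-1 : ℤ) ≤ k := by exact_mod_cast h1.1
    have hk2 : k ≤ 1 := by exact_mod_cast h1.2
    interval_cases k
    · right; right; norm_num
    · left; norm_num
    · right; left; norm_num
  obtain ⟨v, hv⟩ := exists_generic D.Φ D.ne_zero
  have hfin := D.minSet_finite
  have hne : hfin.toFinset.Nonempty := ⟨a, hfin.mem_toFinset.mpr haM⟩
  obtain ⟨m, hmF, hmax⟩ := hfin.toFinset.exists_max_image (fun b => ⟪b, v⟫) hne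
  have hmM : m ∈ D.MinSet := hfin.mem_toFinset.mp hmF
  have hmax' : ∀ b ∈ D.MinSet, ⟪b, v⟫ ≤ ⟪m, v⟫ :=
    fun b hb => hmax b (hfin.mem_toFinset.mpr hb)
  rcases le_or_gt ⟪m, v⟫ 0 with hle | hposm
  · have hzero : ∀ b ∈ D.MinSet, ⟪b, v⟫ = 0 := by
      intro b hb
      have h1 := hmax' b hb
      have h2 := hmax' (-b) (D.minSet_neg hb)
      rw [inner_neg_left] at h2
      linarith
    have hexγ : ∃ γ ∈ D.Φ, ⟪γ, a⟫ ≠ 0 := by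
      by_contra hc
      push_neg at hc
      exact ha0 (D.eq_zero_of_inner_root_zero hc)
    obtain ⟨γ, hγ, hγa⟩ := hexγ
    have hG := D.root_inner_self_pos hγ
    have hb' := D.minSet_reflect haM hγ
    have h1 := hzero a haM
    have h2 := hzero _ hb'
    rw [inner_sub_left, real_inner_smul_left, inner_cv, h1] at h2
    have h3 : ⟪γ, a⟫ * (2 * ⟪γ, v⟫ / ⟪γ, γ⟫) = 0 := by linarith
    rcases mul_eq_zero.mp h3 with h | h
    · exact hγa h
    · rcases div_eq_zero_iff.mp h with h' | h'
      · exact hv γ hγ (by linarith)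
      · exact hG.ne' h'
  · have hm0 : m ≠ 0 := by
      rintro rfl
      rw [inner_zero_left] at hposm
      linarith
    have hdom : ∀ η ∈ D.PosCo v, 0 ≤ ⟪η, m⟫ := by
      intro η hη
      obtain ⟨γ, hγ, hγv, rfl⟩ := (D.mem_posCo_iff).mp hη
      have hG := D.root_inner_self_pos hγ
      rw [inner_cv]
      rcases hmM.2 γ hγ with h | h | h
      · rw [h]; simp
      · rw [h]; positivity
      · exfalso
        have hb' := D.minSet_reflect hmM hγ
        have hup := hmax' _ hb'
        rw [inner_sub_left, real_inner_smul_left, h, inner_cv] at hup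
        have h2 : 0 < 2 * ⟪γ, v⟫ / ⟪γ, γ⟫ := div_pos (by linarith) hG
        linarith
    obtain ⟨l, hl, hlsum⟩ := D.dominant_repr hv hmM.1 hdom
    have hcore := D.core_descent (v := v) (Multiset.card l) l le_rfl hl
      (by intro α hα; rw [← hlsum]; exact hmM.2 α hα)
    rw [← hlsum] at hcore
    exact hm0 hcore

end RootSystemData

end Aux4
noncomputable section Aux5

namespace RootSystemData

variable {n : ℕ}

local notation "V" => EuclideanSpace ℝ (Fin n)

variable (D : RootSystemData n)

/-- Points of the alcove star have all root-pairings in `[-1, 1]`. -/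
lemma alcoveStar_bound {x : V} (hx : x ∈ D.alcoveStar) {α : V} (hα : α ∈ D.Φ) :
    |⟪α, x⟫| ≤ 1 := by
  obtain ⟨A, ⟨x₀, hx₀, rfl⟩, h0, hxA⟩ := hx
  set f : V → ℝ := fun y => ⟪α, y⟫ with hf
  have hcont : Continuous f := Continuous.inner continuous_const continuous_id
  have hA0 : x₀ ∈ connectedComponentIn D.stiefelDiagramᶜ x₀ := mem_connectedComponentIn hx₀
  have hsub := connectedComponentIn_subset D.stiefelDiagramᶜ x₀
  have hconn : IsPreconnected (connectedComponentIn D.stiefelDiagramᶜ x₀) :=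
    isPreconnected_connectedComponentIn
  have havoid : ∀ y ∈ connectedComponentIn D.stiefelDiagramᶜ x₀, ∀ k : ℤ, f y ≠ (k : ℝ) := by
    intro y hy k hk
    apply hsub hy
    rw [stiefelDiagram]
    refine Set.mem_biUnion hα (Set.mem_iUnion.mpr ⟨k, hk⟩)
  set k₀ : ℤ := ⌊f x₀⌋ with hk₀
  have hx₀lt : (k₀ : ℝ) < f x₀ :=
    lt_of_le_of_ne (Int.floor_le _) (fun h => havoid x₀ hA0 k₀ h.symm)
  have hx₀lt2 : f x₀ < (k₀ : ℝ) + 1 := Int.lt_floor_add_one _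
  have himg : ∀ y ∈ connectedComponentIn D.stiefelDiagramᶜ x₀,
      (k₀ : ℝ) ≤ f y ∧ f y ≤ (k₀ : ℝ) + 1 := by
    intro y hy
    constructor
    · by_contra hcon
      push_neg at hcon
      have hmem : (k₀ : ℝ) ∈ Set.Icc (f y) (f x₀) := ⟨hcon.le, hx₀lt.le⟩
      obtain ⟨z, hz, hzeq⟩ := hconn.intermediate_value hy hA0 hcont.continuousOn hmem
      exact havoid z hz k₀ hzeq
    · by_contra hcon
      push_neg at hcon
      have hmem : (k₀ : ℝ) + 1 ∈ Set.Icc (f x₀) (f y) := ⟨hx₀lt2.le, hcon.le⟩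
      obtain ⟨z, hz, hzeq⟩ := hconn.intermediate_value hA0 hy hcont.continuousOn hmem
      refine havoid z hz (k₀ + 1) ?_
      rw [hzeq]
      push_cast
      ring
  have hIcc : closure (f '' connectedComponentIn D.stiefelDiagramᶜ x₀) ⊆
      Set.Icc (k₀ : ℝ) ((k₀ : ℝ) + 1) := by
    apply closure_minimal ?_ isClosed_Icc
    rintro t ⟨y, hy, rfl⟩
    exact ⟨(himg y hy).1, (himg y hy).2⟩
  have himcl : ∀ y ∈ closure (connectedComponentIn D.stiefelDiagramᶜ x₀),
      (k₀ : ℝ) ≤ f y ∧ f y ≤ (k₀ : ℝ) + 1 := by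
    intro y hy
    have : f y ∈ closure (f '' connectedComponentIn D.stiefelDiagramᶜ x₀) :=
      (image_closure_subset_closure_image hcont) (Set.mem_image_of_mem f hy)
    exact ⟨(hIcc this).1, (hIcc this).2⟩
  have h0v : f 0 = 0 := inner_zero_right α
  have h0b := himcl 0 h0
  rw [h0v] at h0b
  have hxb := himcl x hxA
  rw [abs_le]
  constructor <;> linarith [hxb.1, hxb.2, h0b.1, h0b.2]

/-- Interior points of the alcove star have all root-pairings in `(-1, 1)`. -/
lemma interior_bound {x : V} (hx : x ∈ interior D.alcoveStar) {α : V} (hα : α ∈ D.Φ) :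
    |⟪α, x⟫| < 1 := by
  obtain ⟨ε, hε, hball⟩ := Metric.isOpen_iff.mp isOpen_interior x hx
  have hsub : Metric.ball x ε ⊆ D.alcoveStar := hball.trans interior_subset
  have hα0 : α ≠ 0 := D.ne_zero α hα
  have hnα : (0 : ℝ) < ‖α‖ := norm_pos_iff.mpr hα0
  set c : ℝ := ε / (2 * ‖α‖) with hc
  have hcpos : 0 < c := by positivity
  have hval : c * ‖α‖ = ε / 2 := by
    rw [hc]
    field_simp
  have hy1 : x + c • α ∈ Metric.ball x ε := by
    rw [Metric.mem_ball, dist_eq_norm]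
    have he : x + c • α - x = c • α := by abel
    rw [he, norm_smul, Real.norm_eq_abs, abs_of_pos hcpos, hval]
    linarith
  have hy2 : x - c • α ∈ Metric.ball x ε := by
    rw [Metric.mem_ball, dist_eq_norm]
    have he : x - c • α - x = -(c • α) := by abel
    rw [he, norm_neg, norm_smul, Real.norm_eq_abs, abs_of_pos hcpos, hval]
    linarith
  have h1 := D.alcoveStar_bound (hsub hy1) hα
  have h2 := D.alcoveStar_bound (hsub hy2) hα
  rw [inner_add_right, real_inner_smul_right, abs_le] at h1
  rw [inner_sub_right, real_inner_smul_right, abs_le] at h2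
  have hself : (0 : ℝ) < ⟪α, α⟫ := by
    rcases lt_or_eq_of_le (real_inner_self_nonneg (x := α)) with h | h
    · exact h
    · exact absurd (inner_self_eq_zero.mp h.symm) hα0
  have hca : 0 < c * ⟪α, α⟫ := mul_pos hcpos hself
  rw [abs_lt]
  constructor <;> linarith [h1.1, h1.2, h2.1, h2.2]

end RootSystemData

end Aux5
/-- Let `G` be a compact simply-connected simple Lie group, `𝒫` the
union of the closures of the Weyl alcoves around the origin, and `L` the coroot lattice.
If `σ` is a face of `𝒫` such that `σ + a` is also a face of `𝒫` for some nonzero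
`a ∈ L`, then both `σ` and `σ + a` are faces of the boundary of `𝒫`. -/
theorem face_translate_subset_frontier (n : ℕ) (D : RootSystemData n)
    (σ : Set (EuclideanSpace ℝ (Fin n))) (a : EuclideanSpace ℝ (Fin n))
    (ha : a ∈ D.corootLattice) (ha0 : a ≠ 0)
    (hσ : D.IsFaceOfStar σ) (hσa : D.IsFaceOfStar ((a + ·) '' σ)) :
    σ ⊆ frontier D.alcoveStar ∧ (a + ·) '' σ ⊆ frontier D.alcoveStar := by
  obtain ⟨hσne, A, hA, h0A, s, hsΦ, hσeq⟩ := hσ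
  obtain ⟨hσane, A', hA', h0A', s', hs'Φ, hσaeq⟩ := hσa
  have hσsub : σ ⊆ D.alcoveStar := by
    intro x hxσ
    rw [hσeq] at hxσ
    exact ⟨A, hA, h0A, hxσ.1⟩
  have hσasub : (a + ·) '' σ ⊆ D.alcoveStar := by
    intro x hx
    rw [hσaeq] at hx
    exact ⟨A', hA', h0A', hx.1⟩
  have hint : ∀ k : ℤ, ∀ t u : ℝ, |(k : ℝ) + t| ≤ 1 → |u| < 1 → t = u → |(k : ℝ)| ≤ 1 := by
    intro k t u h1 h2 h3
    subst h3
    rw [abs_le] at h1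
    rw [abs_lt] at h2
    have hkr : |(k : ℝ)| < 2 := by
      rw [abs_lt]
      constructor <;> linarith
    have hk2 : |k| < 2 := by
      have : ((|k| : ℤ) : ℝ) < 2 := by rwa [Int.cast_abs]
      exact_mod_cast this
    have hk1 : |k| ≤ 1 := by omega
    rw [← Int.cast_abs]
    exact_mod_cast hk1
  have key1 : ∀ x ∈ σ, x ∉ interior D.alcoveStar := by
    intro x hxσ hxint
    apply ha0
    apply D.lattice_small_eq_zero ha
    intro α hα
    have h1 := D.interior_bound hxint hα
    have h2 := D.alcoveStar_bound (hσasub ⟨x, hxσ, rfl⟩) hα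
    rw [inner_add_right] at h2
    obtain ⟨k, hk⟩ := D.lattice_pairing_int a ha α hα
    rw [hk] at h2 ⊢
    exact hint k _ _ h2 h1 rfl
  have key2 : ∀ y ∈ (a + ·) '' σ, y ∉ interior D.alcoveStar := by
    rintro y ⟨x, hxσ, rfl⟩ hyint
    apply ha0
    apply D.lattice_small_eq_zero ha
    intro α hα
    have h1 := D.interior_bound hyint hα
    have h2 := D.alcoveStar_bound (hσsub hxσ) hα
    simp only at h1
    rw [inner_add_right] at h1
    obtain ⟨k, hk⟩ := D.lattice_pairing_int a ha α hα
    rw [hk] at h1 ⊢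
    -- |k + t| < 1, |t| ≤ 1 ⇒ |k| ≤ 1
    rw [abs_lt] at h1
    rw [abs_le] at h2
    have hkr : |(k : ℝ)| < 2 := by
      rw [abs_lt]
      constructor <;> linarith
    have hk2 : |k| < 2 := by
      have : ((|k| : ℤ) : ℝ) < 2 := by rwa [Int.cast_abs]
      exact_mod_cast this
    have hk1 : |k| ≤ 1 := by omega
    rw [← Int.cast_abs]
    exact_mod_cast hk1
  constructor
  · intro x hxσ
    exact ⟨subset_closure (hσsub hxσ), key1 x hxσ⟩
  · intro y hy
    exact ⟨subset_closure (hσasub hy), key2 y hy⟩
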